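/- Let m ≥ 1, let γ_l > 0 for l = 1,…,m be channel gains, let s > 0, W > 0, and let D be a real number. Then for every real w > 0, the data constraint ∑_{l=1}^m s·W·log₂(1 + max(w − 1/γ_l, 0)·γ_l) ≤ D holds if and only if log₂(w) ≤ (D + s·W·∑_{l=1}^m log₂(min(1/γ_l, w))) / (s·W·m). -/

import Mathlib

/-- The block data constraint for a common water level w > 0 is
equivalent to an explicit upper bound on log₂ w. -/
theorem stmt_6 (m : ℕ) (hm : 1 ≤ m) (γ : ℕ → ℝ)
    (hγ : ∀ l, 1 ≤ l → l ≤ m → 0 < γ l) (s W D w : ℝ)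
    (hs : 0 < s) (hW : 0 < W) (hw : 0 < w) :
    (∑ l ∈ Finset.Icc 1 m,
        s * W * Real.logb 2 (1 + max (w - 1 / γ l) 0 * γ l) ≤ D) ↔
      Real.logb 2 w ≤
        (D + s * W * ∑ l ∈ Finset.Icc 1 m, Real.logb 2 (min (1 / γ l) w)) /
          (s * W * m) := by
  have hkey : ∀ l ∈ Finset.Icc 1 m,
      s * W * Real.logb 2 (1 + max (w - 1 / γ l) 0 * γ l)
        = s * W * (Real.logb 2 w - Real.logb 2 (min (1 / γ l) w)) := by
    intro l hl
    simp only [Finset.mem_Icc] at hl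
    have hg : 0 < γ l := hγ l hl.1 hl.2
    rcases le_or_gt (1 / γ l) w with h | h
    · have hmax : max (w - 1 / γ l) 0 = w - 1 / γ l :=
        max_eq_left (by linarith)
      have hmin : min (1 / γ l) w = 1 / γ l := min_eq_left h
      rw [hmax, hmin]
      have h1 : 1 + (w - 1 / γ l) * γ l = w * γ l := by
        field_simp
        ring
      rw [h1, Real.logb_mul (by positivity) (by positivity),
        one_div, Real.logb_inv]
      ring
    · have hmax : max (w - 1 / γ l) 0 = 0 :=
        max_eq_right (by linarith)
      have hmin : min (1 / γ l) w = w := min_eq_right h.le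
      rw [hmax, hmin]
      simp
  rw [Finset.sum_congr rfl hkey]
  have hcard : (Finset.Icc 1 m).card = m := by simp
  have hsum : ∑ l ∈ Finset.Icc 1 m,
      s * W * (Real.logb 2 w - Real.logb 2 (min (1 / γ l) w))
      = s * W * m * Real.logb 2 w
        - s * W * ∑ l ∈ Finset.Icc 1 m, Real.logb 2 (min (1 / γ l) w) := by
    simp only [mul_sub]
    rw [Finset.sum_sub_distrib, Finset.sum_const, nsmul_eq_mul, hcard,
      Finset.mul_sum]
    simp only [one_div]
    ring
  rw [hsum]
  have hpos : 0 < s * W * (m : ℝ) := by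
    have : (0:ℝ) < m := by exact_mod_cast hm.trans_lt' Nat.zero_lt_one
    positivity
  rw [le_div_iff₀ hpos]
  constructor <;> intro h <;> nlinarith [h]
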